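/- Let F be a multilinear polynomial over F2 with M monomials such that no variable divides F, and for each variable x let μ_x be the number of monomials of F containing x. If F is factorable (F = G·H with G, H nonconstant over disjoint variable sets), then for every variable x of F, gcd(μ_x, M) > 1. -/

import Mathlib

set_option maxHeartbeats 1000000


open MvPolynomial

/-- Substitute the value `a` for the variable `x`. -/
noncomputable def subAt {n : ℕ} (x : Fin n) (a : ZMod 2)
    (F : MvPolynomial (Fin n) (ZMod 2)) : MvPolynomial (Fin n) (ZMod 2) :=
  MvPolynomial.bind₁ (fun i => if i = x then MvPolynomial.C a else MvPolynomial.X i) F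

/-- Formal derivative of a multilinear polynomial: ∂F/∂x = F_{x=0} + F_{x=1}. -/
noncomputable def fder {n : ℕ} (x : Fin n) (F : MvPolynomial (Fin n) (ZMod 2)) :
    MvPolynomial (Fin n) (ZMod 2) :=
  subAt x 0 F + subAt x 1 F

/-- A polynomial is multilinear if every variable occurs with degree ≤ 1 in every monomial. -/
def Multilinear {n : ℕ} (F : MvPolynomial (Fin n) (ZMod 2)) : Prop :=
  ∀ m ∈ F.support, ∀ i, m i ≤ 1

/-- Uniqueness of splitting a finsupp into parts supported on disjoint sets. -/
lemma split_unique {n : ℕ} {S T : Finset (Fin n)} (hd : Disjoint S T)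
    {a a' b b' : Fin n →₀ ℕ} (ha : ∀ i, i ∉ S → a i = 0) (ha' : ∀ i, i ∉ S → a' i = 0)
    (hb : ∀ i, i ∉ T → b i = 0) (hb' : ∀ i, i ∉ T → b' i = 0)
    (h : a + b = a' + b') : a = a' ∧ b = b' := by
  have key : ∀ i, a i = a' i ∧ b i = b' i := by
    intro i
    have hi : a i + b i = a' i + b' i := by
      rw [← Finsupp.add_apply, ← Finsupp.add_apply, h]
    by_cases hiS : i ∈ S
    · have hiT : i ∉ T := fun hT => (Finset.disjoint_left.mp hd hiS) hT
      have := hb i hiT; have := hb' i hiT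
      constructor <;> omega
    · have := ha i hiS; have := ha' i hiS
      constructor <;> omega
  exact ⟨Finsupp.ext fun i => (key i).1, Finsupp.ext fun i => (key i).2⟩

lemma supp_in_vars {n : ℕ} {G : MvPolynomial (Fin n) (ZMod 2)} {a : Fin n →₀ ℕ}
    (ha : a ∈ G.support) : ∀ i, i ∉ G.vars → a i = 0 := by
  intro i hi
  by_contra h
  exact hi ((mem_vars i).mpr ⟨a, ha, Finsupp.mem_support_iff.mpr h⟩)

lemma coeff_mul_disjoint {n : ℕ} {G H : MvPolynomial (Fin n) (ZMod 2)}
    (hdisj : Disjoint G.vars H.vars) {a b : Fin n →₀ ℕ}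
    (ha : ∀ i, i ∉ G.vars → a i = 0) (hb : ∀ i, i ∉ H.vars → b i = 0) :
    MvPolynomial.coeff (a + b) (G * H) = MvPolynomial.coeff a G * MvPolynomial.coeff b H := by
  rw [MvPolynomial.coeff_mul]
  apply Finset.sum_eq_single (a, b)
  · rintro ⟨u, v⟩ huv hne
    rw [Finset.HasAntidiagonal.mem_antidiagonal] at huv
    by_cases hu : MvPolynomial.coeff u G = 0
    · simp [hu]
    by_cases hv : MvPolynomial.coeff v H = 0
    · simp [hv]
    exfalso
    have hu' := supp_in_vars (Finsupp.mem_support_iff.mpr hu)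
    have hv' := supp_in_vars (Finsupp.mem_support_iff.mpr hv)
    obtain ⟨h1, h2⟩ := split_unique hdisj hu' ha hv' hb huv
    exact hne (by simp [h1, h2])
  · intro h
    rw [Finset.HasAntidiagonal.mem_antidiagonal] at h
    exact absurd rfl h

lemma support_mul_disjoint {n : ℕ} {G H : MvPolynomial (Fin n) (ZMod 2)}
    (hdisj : Disjoint G.vars H.vars) :
    (G * H).support = (G.support ×ˢ H.support).image fun p => p.1 + p.2 := by
  ext m
  simp only [Finset.mem_image, Finset.mem_product, MvPolynomial.mem_support_iff, Prod.exists]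
  constructor
  · intro hm
    rw [MvPolynomial.coeff_mul] at hm
    obtain ⟨⟨u, v⟩, huv, hne⟩ := Finset.exists_ne_zero_of_sum_ne_zero hm
    rw [Finset.HasAntidiagonal.mem_antidiagonal] at huv
    exact ⟨u, v, ⟨fun h => hne (by simp [h]), fun h => hne (by simp [h])⟩, huv⟩
  · rintro ⟨a, b, ⟨ha, hb⟩, rfl⟩
    rw [coeff_mul_disjoint hdisj (supp_in_vars (Finsupp.mem_support_iff.mpr ha))
      (supp_in_vars (Finsupp.mem_support_iff.mpr hb))]
    exact mul_ne_zero ha hb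

lemma injOn_add {n : ℕ} {G H : MvPolynomial (Fin n) (ZMod 2)}
    (hdisj : Disjoint G.vars H.vars) :
    Set.InjOn (fun p : (Fin n →₀ ℕ) × (Fin n →₀ ℕ) => p.1 + p.2)
      ↑(G.support ×ˢ H.support) := by
  rintro ⟨a, b⟩ hab ⟨a', b'⟩ hab' h
  simp only [Finset.coe_product, Set.mem_prod, Finset.mem_coe,
    MvPolynomial.mem_support_iff] at hab hab'
  obtain ⟨h1, h2⟩ := split_unique hdisj
    (supp_in_vars (Finsupp.mem_support_iff.mpr hab.1))
    (supp_in_vars (Finsupp.mem_support_iff.mpr hab'.1))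
    (supp_in_vars (Finsupp.mem_support_iff.mpr hab.2))
    (supp_in_vars (Finsupp.mem_support_iff.mpr hab'.2)) h
  simp [h1, h2]

lemma two_le_card_support {n : ℕ} {H : MvPolynomial (Fin n) (ZMod 2)}
    (hH0 : H ≠ 0) (hHnc : ∀ c : ZMod 2, H ≠ MvPolynomial.C c)
    (hnodiv : ∀ z : Fin n, ¬ MvPolynomial.X z ∣ H) : 2 ≤ H.support.card := by
  rcases Nat.lt_or_ge H.support.card 2 with h | h
  · exfalso
    interval_cases hc : H.support.card
    · exact hH0 (MvPolynomial.support_eq_empty.mp (Finset.card_eq_zero.mp hc))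
    · obtain ⟨d, hd⟩ := Finset.card_eq_one.mp hc
      have hHeq : H = MvPolynomial.monomial d (MvPolynomial.coeff d H) := by
        apply MvPolynomial.ext
        intro m
        rw [MvPolynomial.coeff_monomial]
        split
        · next h => rw [h]
        · next h =>
          apply MvPolynomial.notMem_support_iff.mp
          rw [hd, Finset.mem_singleton]
          exact fun hh => h hh.symm
      have hd0 : d ≠ 0 := by
        rintro rfl
        exact hHnc (MvPolynomial.coeff 0 H) (by rw [MvPolynomial.C_apply]; exact hHeq)
      obtain ⟨z, hz⟩ := Finsupp.support_nonempty_iff.mpr hd0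
      have dd : Finsupp.single z 1 + (d - Finsupp.single z 1) = d := by
        apply add_tsub_cancel_of_le
        rw [Finsupp.single_le_iff]
        exact Nat.one_le_iff_ne_zero.mpr (Finsupp.mem_support_iff.mp hz)
      apply hnodiv z
      refine ⟨MvPolynomial.monomial (d - Finsupp.single z 1) (MvPolynomial.coeff d H), ?_⟩
      rw [MvPolynomial.X, MvPolynomial.monomial_mul, one_mul, dd]
      exact hHeq
  · exact h

/-- The key counting lemma: if `x ∈ G.vars`, the number of monomials of `G*H` containing `x`
is `(number of monomials of G containing x) * (number of monomials of H)`. -/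
lemma count_mul {n : ℕ} {G H : MvPolynomial (Fin n) (ZMod 2)}
    (hdisj : Disjoint G.vars H.vars) (x : Fin n) (hx : x ∈ G.vars) :
    ((G * H).support.filter fun m => m x ≠ 0).card
      = (G.support.filter fun a => a x ≠ 0).card * H.support.card := by
  rw [support_mul_disjoint hdisj, Finset.filter_image]
  have hxH : x ∉ H.vars := Finset.disjoint_left.mp hdisj hx
  have hfe : ((G.support ×ˢ H.support).filter fun p => (p.1 + p.2) x ≠ 0)
      = (G.support.filter fun a => a x ≠ 0) ×ˢ H.support := by
    ext p
    rcases p with ⟨a, b⟩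
    simp only [Finset.mem_filter, Finset.mem_product]
    simp only [Finsupp.coe_add, Pi.add_apply]
    constructor
    · rintro ⟨⟨ha, hb⟩, hne⟩
      have : b x = 0 := supp_in_vars hb x hxH
      exact ⟨⟨ha, by omega⟩, hb⟩
    · rintro ⟨⟨ha, hax⟩, hb⟩
      exact ⟨⟨ha, hb⟩, by omega⟩
  rw [hfe, Finset.card_image_of_injOn, Finset.card_product]
  exact (injOn_add hdisj).mono (by
    intro p hp
    simp only [Finset.coe_product, Set.mem_prod, Finset.mem_coe] at hp ⊢
    exact ⟨Finset.mem_of_mem_filter _ hp.1, hp.2⟩)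

lemma card_support_mul_disjoint {n : ℕ} {G H : MvPolynomial (Fin n) (ZMod 2)}
    (hdisj : Disjoint G.vars H.vars) :
    (G * H).support.card = G.support.card * H.support.card := by
  rw [support_mul_disjoint hdisj, Finset.card_image_of_injOn (injOn_add hdisj),
    Finset.card_product]

lemma key_side {n : ℕ} {G H : MvPolynomial (Fin n) (ZMod 2)}
    (hdisj : Disjoint G.vars H.vars)
    (hG0 : G ≠ 0) (hH0 : H ≠ 0) (hHnc : ∀ c : ZMod 2, H ≠ MvPolynomial.C c)
    (hnodivH : ∀ z : Fin n, ¬ MvPolynomial.X z ∣ H)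
    (x : Fin n) (hx : x ∈ G.vars) :
    1 < Nat.gcd (((G * H).support.filter fun m => m x ≠ 0).card) (G * H).support.card := by
  have h2 : 2 ≤ H.support.card := two_le_card_support hH0 hHnc hnodivH
  have hd1 : H.support.card ∣ ((G * H).support.filter fun m => m x ≠ 0).card :=
    ⟨(G.support.filter fun a => a x ≠ 0).card, by rw [count_mul hdisj x hx, mul_comm]⟩
  have hd2 : H.support.card ∣ (G * H).support.card :=
    ⟨G.support.card, by rw [card_support_mul_disjoint hdisj, mul_comm]⟩
  have hdvd : H.support.card ∣ Nat.gcd (((G * H).support.filter fun m => m x ≠ 0).card)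
      (G * H).support.card := Nat.dvd_gcd hd1 hd2
  have hpos : 0 < (G * H).support.card := by
    rw [card_support_mul_disjoint hdisj]
    exact Nat.mul_pos (Finset.card_pos.mpr (Finset.nonempty_iff_ne_empty.mpr (mt MvPolynomial.support_eq_empty.mp hG0)))
      (by omega)
  calc 1 < H.support.card := by omega
    _ ≤ _ := Nat.le_of_dvd (Nat.gcd_pos_of_pos_right _ hpos) hdvd

theorem stmt_11 {n : ℕ} (F G H : MvPolynomial (Fin n) (ZMod 2))
    (hML : Multilinear F)
    (hnodiv : ∀ z : Fin n, ¬ MvPolynomial.X z ∣ F)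
    (hfac : F = G * H) (hdisj : Disjoint G.vars H.vars)
    (hGnc : ∀ c : ZMod 2, G ≠ MvPolynomial.C c)
    (hHnc : ∀ c : ZMod 2, H ≠ MvPolynomial.C c) :
    ∀ x ∈ F.vars,
      1 < Nat.gcd ((F.support.filter (fun m => m x ≠ 0)).card) F.support.card := by
  intro x hx
  subst hfac
  have hF0 : G * H ≠ 0 := by
    intro h
    rw [h] at hx
    simp [MvPolynomial.vars_0] at hx
  have hG0 : G ≠ 0 := fun h => hF0 (by rw [h, zero_mul])
  have hH0 : H ≠ 0 := fun h => hF0 (by rw [h, mul_zero])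
  have hnodivG : ∀ z : Fin n, ¬ MvPolynomial.X z ∣ G := fun z hz =>
    hnodiv z (hz.trans (dvd_mul_right G H))
  have hnodivH : ∀ z : Fin n, ¬ MvPolynomial.X z ∣ H := fun z hz =>
    hnodiv z (hz.trans (dvd_mul_left H G))
  have hmem := MvPolynomial.vars_mul G H hx
  rw [Finset.mem_union] at hmem
  rcases hmem with hxG | hxH
  · exact key_side hdisj hG0 hH0 hHnc hnodivH x hxG
  · have := key_side hdisj.symm hH0 hG0 hGnc hnodivG x hxH
    rwa [mul_comm] at this
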